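/- Let K ≥ 1 and define μ ∈ ℝ^K by μ_i = 2^{−2(K−i)−1} and g ∈ ℝ^K by g_i = 2^{K−i} for i ∈ {1,…,K}. Then for every subset A ⊆ {1,…,K}, ∑_{i∈A} μ_i(1−μ_i)g_i² + 2∑_{i<j, i,j∈A} μ_i(1−μ_j)g_i g_j ≤ 2|A|. -/

import Mathlib

lemma half_pow_key (n : ℕ) :
    (1/2:ℝ)^(2*n+1) * ((2:ℝ)^n * (2:ℝ)^n) = 1/2 := by
  have h : ((1/2:ℝ))^n * (2:ℝ)^n = 1 := by rw [← mul_pow]; norm_num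
  calc (1/2:ℝ)^(2*n+1) * ((2:ℝ)^n * (2:ℝ)^n)
      = ((1/2:ℝ)^n * 2^n) * ((1/2:ℝ)^n * 2^n) * (1/2) := by
        rw [two_mul, pow_succ, pow_add]; ring
    _ = 1/2 := by rw [h]; ring

lemma geom_aux : ∀ (K i : ℕ), i ≤ K →
    ∑ j ∈ Finset.Icc (i+1) K, (2:ℝ)^(K-j) = 2^(K-i) - 1 := by
  intro K
  induction K with
  | zero => intro i hi; interval_cases i; simp
  | succ K ih =>
    intro i hi
    rcases Nat.eq_or_lt_of_le hi with h | h
    · subst h; rw [Finset.Icc_eq_empty (by omega)]; simp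
    · have hiK : i ≤ K := Nat.lt_succ_iff.mp h
      rw [Finset.sum_Icc_succ_top (by omega : i+1 ≤ K+1)]
      have hcongr : ∀ j ∈ Finset.Icc (i+1) K, (2:ℝ)^(K+1-j) = 2*(2:ℝ)^(K-j) := by
        intro j hj
        have := (Finset.mem_Icc.mp hj).2
        rw [show K+1-j = (K-j)+1 by omega, pow_succ]; ring
      rw [Finset.sum_congr rfl hcongr, ← Finset.mul_sum, ih i hiK,
        show K+1-i = (K-i)+1 by omega, pow_succ]
      simp; ring

/-- Tightness example, upper bound: with `μᵢ = 2^{−2(K−i)−1}` and `gᵢ = 2^{K−i}`, for every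
subset `A ⊆ {1,…,K}` the restricted modified Gini-weighted smoothness satisfies
`γ̃²(A) ≤ 2|A|`. -/
theorem modified_gini_tightness_upper (K : ℕ) (hK : 1 ≤ K) (μ g : ℕ → ℝ)
    (hμ : ∀ i ∈ Finset.Icc 1 K, μ i = (1 / 2 : ℝ) ^ (2 * (K - i) + 1))
    (hg : ∀ i ∈ Finset.Icc 1 K, g i = (2 : ℝ) ^ (K - i))
    (A : Finset ℕ) (hA : A ⊆ Finset.Icc 1 K) :
    (∑ i ∈ A, μ i * (1 - μ i) * (g i) ^ 2)
      + 2 * ∑ i ∈ A, ∑ j ∈ A.filter (fun j => i < j), μ i * (1 - μ j) * (g i * g j)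
    ≤ 2 * A.card := by
  have hμ0 : ∀ i ∈ Finset.Icc 1 K, (0:ℝ) ≤ μ i := by
    intro i hi; rw [hμ i hi]; positivity
  have hg0 : ∀ i ∈ Finset.Icc 1 K, (0:ℝ) ≤ g i := by
    intro i hi; rw [hg i hi]; positivity
  -- diagonal terms
  have h1 : ∀ i ∈ A, μ i * (1 - μ i) * (g i)^2 ≤ 1/2 := by
    intro i hi
    have hiK := hA hi
    have ha := hμ0 i hiK
    have hb := hg0 i hiK
    have key := half_pow_key (K - i)
    rw [hμ i hiK, hg i hiK] at *
    nlinarith [mul_nonneg (mul_nonneg (mul_nonneg ha ha) hb) hb, sq_nonneg ((2:ℝ)^(K-i))]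
  -- inner sums
  have h2 : ∀ i ∈ A, ∑ j ∈ A.filter (fun j => i < j), μ i * (1 - μ j) * (g i * g j) ≤ 1/2 := by
    intro i hi
    have hiK := hA hi
    have hiK' := Finset.mem_Icc.mp hiK
    have hsub : A.filter (fun j => i < j) ⊆ Finset.Icc (i+1) K := by
      intro j hj
      rw [Finset.mem_filter] at hj
      have := Finset.mem_Icc.mp (hA hj.1)
      exact Finset.mem_Icc.mpr ⟨by omega, this.2⟩
    have hIccsub : Finset.Icc (i+1) K ⊆ Finset.Icc 1 K := by
      intro j hj; have := Finset.mem_Icc.mp hj; exact Finset.mem_Icc.mpr ⟨by omega, this.2⟩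
    have hμgi : (0:ℝ) ≤ μ i * g i := mul_nonneg (hμ0 i hiK) (hg0 i hiK)
    calc ∑ j ∈ A.filter (fun j => i < j), μ i * (1 - μ j) * (g i * g j)
        ≤ ∑ j ∈ A.filter (fun j => i < j), μ i * g i * g j := by
          apply Finset.sum_le_sum
          intro j hj
          have hjK := hA (Finset.mem_filter.mp hj).1
          have hc := hμ0 j hjK
          have hx := hg0 i hiK
          have hy := hg0 j hjK
          have ha := hμ0 i hiK
          nlinarith [mul_nonneg (mul_nonneg (mul_nonneg ha hc) hx) hy]
      _ ≤ ∑ j ∈ Finset.Icc (i+1) K, μ i * g i * g j := by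
          apply Finset.sum_le_sum_of_subset_of_nonneg hsub
          intro j hj _
          exact mul_nonneg hμgi (hg0 j (hIccsub hj))
      _ = ∑ j ∈ Finset.Icc (i+1) K, μ i * g i * (2:ℝ)^(K-j) :=
          Finset.sum_congr rfl fun j hj => by rw [hg j (hIccsub hj)]
      _ = μ i * g i * ∑ j ∈ Finset.Icc (i+1) K, (2:ℝ)^(K-j) := by
          rw [← Finset.mul_sum]
      _ = μ i * g i * ((2:ℝ)^(K-i) - 1) := by rw [geom_aux K i hiK'.2]
      _ ≤ μ i * g i * (2:ℝ)^(K-i) := by nlinarith [hμgi]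
      _ = 1/2 := by
          rw [hμ i hiK, hg i hiK, mul_assoc]
          exact half_pow_key (K - i)
  have s1 : ∑ i ∈ A, μ i * (1 - μ i) * (g i)^2 ≤ (A.card : ℝ) * (1/2) := by
    calc ∑ i ∈ A, μ i * (1 - μ i) * (g i)^2 ≤ A.card • (1/2:ℝ) :=
          Finset.sum_le_card_nsmul A _ _ h1
      _ = (A.card : ℝ) * (1/2) := by rw [nsmul_eq_mul]
  have s2 : ∑ i ∈ A, ∑ j ∈ A.filter (fun j => i < j), μ i * (1 - μ j) * (g i * g j)
      ≤ (A.card : ℝ) * (1/2) := by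
    calc _ ≤ A.card • (1/2:ℝ) := Finset.sum_le_card_nsmul A _ _ h2
      _ = (A.card : ℝ) * (1/2) := by rw [nsmul_eq_mul]
  have hcard : (0:ℝ) ≤ (A.card : ℝ) := Nat.cast_nonneg _
  linarith
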